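/- Let X̂ and X be topological spaces with X̂ connected, and let π : X̂ → X be a covering map such that every fiber π⁻¹(x) has exactly two elements (a double covering). Let f : X → X and f̂ : X̂ → X̂ be homeomorphisms with π ∘ f̂ = f ∘ π (f̂ is a lift of f). If every point of X is nonwandering for f, then every point of X̂ is nonwandering for f̂. -/

import Mathlib

open Set Topology

/-- A point `x` is nonwandering for `f` if every open neighborhood `U` of `x`
satisfies `f^[n] '' U ∩ U ≠ ∅` for some `n > 0`. -/
def IsNonwanderingPt {X : Type*} [TopologicalSpace X] (f : X → X) (x : X) : Prop :=
  ∀ U : Set X, IsOpen U → x ∈ U → ∃ n : ℕ, 0 < n ∧ (f^[n] '' U ∩ U).Nonempty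

/-- A point `x` is periodic for `f` if `f^[n] x = x` for some `n > 0`. -/
def IsPerPt {X : Type*} (f : X → X) (x : X) : Prop :=
  ∃ n : ℕ, 0 < n ∧ f^[n] x = x

/-- The collection of connected components of the set `E`. -/
def connComps {S : Type*} [TopologicalSpace S] (E : Set S) : Set (Set S) :=
  {C | ∃ x ∈ E, C = connectedComponentIn E x}

/-- A set `K` is annular if it has an open neighborhood `A` homeomorphic to the
open annulus `AddCircle 1 × ℝ` such that `A \ K` has exactly two connected
components, both homeomorphic to the open annulus. -/
def IsAnnular {S : Type*} [TopologicalSpace S] (K : Set S) : Prop :=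
  ∃ A : Set S, IsOpen A ∧ K ⊆ A ∧ Nonempty (A ≃ₜ (AddCircle (1 : ℝ) × ℝ)) ∧
    (connComps (A \ K)).encard = 2 ∧
    ∀ C ∈ connComps (A \ K), Nonempty (C ≃ₜ (AddCircle (1 : ℝ) × ℝ))


private lemma sheets {Xh X : Type*} [TopologicalSpace Xh] [TopologicalSpace X]
    (π : Xh → X) (hcov : IsCoveringMap π)
    (hfib : ∀ x : X, (π ⁻¹' {x}).encard = 2)
    (x : Xh) (U₀ : Set Xh) (hU₀ : IsOpen U₀) (hx : x ∈ U₀) :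
    ∃ U U' : Set Xh, IsOpen U ∧ IsOpen U' ∧ x ∈ U ∧ U ⊆ U₀ ∧
      Disjoint U U' ∧ Set.InjOn π U' ∧ π '' U' = π '' U ∧
      π ⁻¹' (π '' U) ⊆ U ∪ U' := by
  classical
  haveI := (hcov (π x)).1
  obtain ⟨a, b, hab, hFab⟩ := Set.encard_eq_two.mp (hfib (π x))
  haveI : Nonempty ↑(π ⁻¹' {π x}) := ⟨⟨x, rfl⟩⟩
  set t := (hcov (π x)).toTrivialization with ht
  have hxbase : π x ∈ t.baseSet := (hcov (π x)).mem_toTrivialization_baseSet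
  have hxsrc : x ∈ t.source := t.mem_source.mpr hxbase
  have ha : a ∈ π ⁻¹' {π x} := by rw [hFab]; left; rfl
  have hb : b ∈ π ⁻¹' {π x} := by rw [hFab]; right; rfl
  have hmem : ∀ c : ↥(π ⁻¹' {π x}), (c : Xh) = a ∨ (c : Xh) = b := by
    intro c
    obtain ⟨cv, hcv⟩ := c
    rw [hFab] at hcv
    exact hcv
  set i : ↥(π ⁻¹' {π x}) := (t x).2 with hi
  set j : ↥(π ⁻¹' {π x}) := if (i : Xh) = a then ⟨b, hb⟩ else ⟨a, ha⟩ with hj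
  have hji : j ≠ i := by
    rcases hmem i with h | h
    · rw [hj, if_pos h]
      intro hc
      rw [← hc] at h
      exact hab h.symm
    · have : (i : Xh) ≠ a := by rw [h]; exact fun hc => hab hc.symm
      rw [hj, if_neg this]
      intro hc
      rw [← hc] at h
      exact hab h
  have hall : ∀ k : ↥(π ⁻¹' {π x}), k = i ∨ k = j := by
    intro k
    rcases hmem k with hk | hk <;> rcases hmem i with hi' | hi'
    · left; exact Subtype.ext (hk.trans hi'.symm)
    · right
      rw [hj, if_neg (by rw [hi']; exact fun hc => hab hc.symm)]
      exact Subtype.ext hk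
    · right
      rw [hj, if_pos hi']
      exact Subtype.ext hk
    · left; exact Subtype.ext (hk.trans hi'.symm)
  -- sheets
  set S : ↥(π ⁻¹' {π x}) → Set Xh := fun k => t.source ∩ (fun z => (t z).2) ⁻¹' {k} with hS
  have hSopen : ∀ k, IsOpen (S k) := by
    intro k
    have hc : ContinuousOn (fun z => (t z).2) t.source :=
      continuous_snd.comp_continuousOn t.continuousOn_toFun
    exact hc.isOpen_inter_preimage t.open_source (isOpen_discrete _)
  have hSinj : ∀ k, Set.InjOn π (S k) := by
    intro k z hz z' hz' hzz
    have h1 : t z = (π z, k) := Prod.ext (t.coe_fst hz.1) hz.2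
    have h2 : t z' = (π z', k) := Prod.ext (t.coe_fst hz'.1) hz'.2
    have h3 : t z = t z' := by rw [h1, h2, hzz]
    exact t.toPartialHomeomorph.injOn hz.1 hz'.1 h3
  have hSimg : ∀ k, π '' S k = t.baseSet := by
    intro k
    apply Set.Subset.antisymm
    · rintro _ ⟨z, hz, rfl⟩
      exact t.mem_source.mp hz.1
    · intro b' hb'
      refine ⟨t.toPartialHomeomorph.symm (b', k), ⟨?_, ?_⟩, t.proj_symm_apply' hb'⟩
      · exact t.toPartialHomeomorph.map_target (t.mem_target.mpr hb')
      · have := t.apply_symm_apply (t.mem_target.mpr hb' : ((b', k) : X × _) ∈ t.target)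
        simp only [Set.mem_preimage, Set.mem_singleton_iff]
        exact congrArg Prod.snd this
  have hdich : ∀ z : Xh, π z ∈ t.baseSet → z ∈ S i ∪ S j := by
    intro z hz
    have hzs : z ∈ t.source := t.mem_source.mpr hz
    rcases hall ((t z).2) with h | h
    · left; exact ⟨hzs, h⟩
    · right; exact ⟨hzs, h⟩
  have hSdisj : Disjoint (S i) (S j) := by
    rw [Set.disjoint_left]
    rintro z ⟨_, hzi⟩ ⟨_, hzj⟩
    exact hji ((Set.mem_singleton_iff.mp hzj).symm.trans (Set.mem_singleton_iff.mp hzi))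
  -- shrink
  set W₀ : Set X := π '' (S i ∩ U₀) with hW₀
  have hW₀open : IsOpen W₀ := hcov.isOpenMap _ ((hSopen i).inter hU₀)
  have hW₀base : W₀ ⊆ t.baseSet := by
    rintro _ ⟨z, hz, rfl⟩
    exact t.mem_source.mp hz.1.1
  refine ⟨S i ∩ π ⁻¹' W₀, S j ∩ π ⁻¹' W₀, (hSopen i).inter (hW₀open.preimage hcov.continuous),
    (hSopen j).inter (hW₀open.preimage hcov.continuous), ⟨⟨hxsrc, rfl⟩, ⟨x, ⟨⟨hxsrc, rfl⟩, hx⟩, rfl⟩⟩,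
    ?_, hSdisj.mono inter_subset_left inter_subset_left,
    (hSinj j).mono inter_subset_left, ?_, ?_⟩
  · -- U ⊆ U₀
    rintro z ⟨hzSi, hzW⟩
    obtain ⟨u, hu, huz⟩ := hzW
    have heq := hSinj i hzSi hu.1 huz.symm
    rw [heq]
    exact hu.2
  · -- π '' U' = π '' U
    have h1 : π '' (S i ∩ π ⁻¹' W₀) = W₀ := by
      apply Set.Subset.antisymm
      · rintro _ ⟨z, hz, rfl⟩; exact hz.2
      · intro b' hb'
        obtain ⟨u, hu, rfl⟩ := (hSimg i).symm ▸ hW₀base hb'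
        exact ⟨u, ⟨hu, hb'⟩, rfl⟩
    have h2 : π '' (S j ∩ π ⁻¹' W₀) = W₀ := by
      apply Set.Subset.antisymm
      · rintro _ ⟨z, hz, rfl⟩; exact hz.2
      · intro b' hb'
        obtain ⟨u, hu, rfl⟩ := (hSimg j).symm ▸ hW₀base hb'
        exact ⟨u, ⟨hu, hb'⟩, rfl⟩
    rw [h1, h2]
  · -- dichotomy
    intro z hz
    have h1 : π '' (S i ∩ π ⁻¹' W₀) ⊆ W₀ := by rintro _ ⟨w, hw, rfl⟩; exact hw.2
    have hzW : π z ∈ W₀ := h1 hz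
    rcases hdich z (hW₀base hzW) with h | h
    · left; exact ⟨h, hzW⟩
    · right; exact ⟨h, hzW⟩

theorem stmt12 {Xh X : Type*} [TopologicalSpace Xh] [TopologicalSpace X]
    [ConnectedSpace Xh] (π : Xh → X) (hcov : IsCoveringMap π)
    (hfib : ∀ x : X, (π ⁻¹' {x}).encard = 2)
    (f : X ≃ₜ X) (fh : Xh ≃ₜ Xh) (hlift : π ∘ ⇑fh = ⇑f ∘ π)
    (hnw : ∀ x : X, IsNonwanderingPt (⇑f) x) :
    ∀ x : Xh, IsNonwanderingPt (⇑fh) x := by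
  intro x U₀ hU₀o hxU₀
  obtain ⟨U, U', hUo, hU'o, hxU, hUU₀, hdisj, hinj', himg, hdich⟩ :=
    sheets π hcov hfib x U₀ hU₀o hxU₀
  have hsemi : Function.Semiconj π (⇑fh) (⇑f) := fun z => congrFun hlift z
  have hiter : ∀ (n : ℕ) (z : Xh), π ((⇑fh)^[n] z) = (⇑f)^[n] (π z) :=
    fun n z => hsemi.iterate_right n z
  have hWopen : IsOpen (π '' U) := hcov.isOpenMap _ hUo
  obtain ⟨n₁, hn₁, z₁, hz₁⟩ := hnw (π x) (π '' U) hWopen ⟨x, hxU, rfl⟩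
  obtain ⟨⟨y₁, ⟨u, huU, rfl⟩, hfy₁⟩, hz₁W⟩ := hz₁
  have h1 : π ((⇑fh)^[n₁] u) ∈ π '' U := by rw [hiter n₁ u, hfy₁]; exact hz₁W
  rcases hdich h1 with hcase | hcase
  · exact ⟨n₁, hn₁, _, ⟨u, hUU₀ huU, rfl⟩, hUU₀ hcase⟩
  · set V := U ∩ (⇑fh)^[n₁] ⁻¹' U' with hV
    have hVo : IsOpen V := hUo.inter (hU'o.preimage (fh.continuous.iterate n₁))
    have huV : u ∈ V := ⟨huU, hcase⟩
    have hπVo : IsOpen (π '' V) := hcov.isOpenMap _ hVo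
    obtain ⟨n₂, hn₂, z₂, hz₂⟩ := hnw (π u) (π '' V) hπVo ⟨u, huV, rfl⟩
    obtain ⟨⟨y₂, ⟨v, hvV, rfl⟩, hfy₂⟩, ⟨v', hv'V, hv'eq⟩⟩ := hz₂
    have hπ2 : π ((⇑fh)^[n₂] v) = π v' := by rw [hiter n₂ v, hfy₂, hv'eq]
    have h2' : π ((⇑fh)^[n₂] v) ∈ π '' U := ⟨v', hv'V.1, hπ2.symm⟩
    rcases hdich h2' with h2 | h2
    · exact ⟨n₂, hn₂, _, ⟨v, hUU₀ hvV.1, rfl⟩, hUU₀ h2⟩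
    · have hne : (⇑fh)^[n₂] v ≠ v' := by
        intro hc
        exact (Set.disjoint_right.mp hdisj h2) (hc ▸ hv'V.1)
      have hv'U' : (⇑fh)^[n₁] v' ∈ U' := hv'V.2
      have hπw : π ((⇑fh)^[n₁ + n₂] v) = π ((⇑fh)^[n₁] v') := by
        rw [Function.iterate_add_apply, hiter n₁, hiter n₁, hπ2]
      have h3' : π ((⇑fh)^[n₁ + n₂] v) ∈ π '' U := by
        rw [hπw, ← himg]
        exact ⟨(⇑fh)^[n₁] v', hv'U', rfl⟩
      rcases hdich h3' with h3 | h3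
      · exact ⟨n₁ + n₂, by omega, _, ⟨v, hUU₀ hvV.1, rfl⟩, hUU₀ h3⟩
      · exfalso
        have heq : (⇑fh)^[n₁ + n₂] v = (⇑fh)^[n₁] v' := hinj' h3 hv'U' hπw
        rw [Function.iterate_add_apply] at heq
        exact hne ((fh.injective.iterate n₁) heq)
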